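/- arXiv:2202.09341 — 5 statements merged into one kernel-verified Lean document; each statement's English description precedes it below -/
import Mathlib

section
/- Consider the recursion Y_{n+1} = max(Y_n, P_n) − 1 truncated at 0 (i.e., Y_{n+1} = (max(Y_n, P_n) − 1)⁺) on ℝ₊, and the map g(y,p) = (max(y,p) − 1)⁺. Then for every fixed p ≥ 0, the map y ↦ g(y,p) is nondecreasing on ℝ₊; moreover, if φ(x) denotes the largest remaining patience in state x of the matching model (with φ(∅)=0), then φ(f^Φ(x,(p,v))) ≤ g(φ(x), p) for any admissible matching policy Φ, any state x and any arrival (p,v). -/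
/-- The infinite-server recursion map `g(y, p) = (max(y, p) − 1)⁺`. -/
noncomputable def gmap (y q : ℝ) : ℝ := max (max y q - 1) 0

/-- Largest remaining patience in a state of the matching model (`φ(∅) = 0`). -/
def phi {V : Type*} (x : List (ℝ × V)) : ℝ := (x.map Prod.fst).foldr max 0

lemma le_phi {V : Type*} {x : List (ℝ × V)} {a : ℝ × V} (h : a ∈ x) : a.1 ≤ phi x := by
  induction x with
  | nil => simp at h
  | cons b t ih =>
    rcases List.mem_cons.mp h with rfl | h
    · simp [phi]
    · exact le_trans (ih h) (le_max_right _ _)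

lemma phi_le {V : Type*} {x : List (ℝ × V)} {b : ℝ} (hb : 0 ≤ b)
    (h : ∀ a ∈ x, a.1 ≤ b) : phi x ≤ b := by
  induction x with
  | nil => simpa [phi] using hb
  | cons a t ih =>
    simp only [phi, List.map_cons, List.foldr_cons]
    exact max_le (h a (by simp)) (ih fun a ha => h a (List.mem_cons_of_mem _ ha))

/-- First, `y ↦ g(y, p)` is nondecreasing on `ℝ₊` for every `p ≥ 0`. Second, for any
admissible matching policy, one step of the profile chain (the result state is obtained by
keeping a subword `y` of `x` with the arrival `(p, v)` possibly appended — the matched pair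
being removed — then discarding items of remaining patience `< 1` and decreasing all
remaining patiences by 1) satisfies `φ(f^Φ(x, (p, v))) ≤ g(φ(x), p)`. -/
theorem stmt4 {V : Type*} :
    (∀ q : ℝ, 0 ≤ q → MonotoneOn (fun y => gmap y q) (Set.Ici (0 : ℝ))) ∧
    (∀ (x y : List (ℝ × V)) (q : ℝ) (c : V), 0 ≤ q →
      y.Sublist (x ++ [(q, c)]) →
      phi ((y.filter (fun r => 1 ≤ r.1)).map (fun r => (r.1 - 1, r.2))) ≤
        gmap (phi x) q) := by
  constructor
  · intro q hq y1 _ y2 _ h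
    dsimp [gmap]
    exact max_le_max (sub_le_sub_right (max_le_max h le_rfl) 1) le_rfl
  · intro x y q c hq hsub
    apply phi_le (le_max_right _ _)
    intro a ha
    simp only [List.mem_map, List.mem_filter] at ha
    obtain ⟨r, ⟨hry, _⟩, rfl⟩ := ha
    have hrx : r ∈ x ++ [(q, c)] := hsub.mem hry
    have : r.1 ≤ max (phi x) q := by
      rcases List.mem_append.mp hrx with h | h
      · exact le_trans (le_phi h) (le_max_left _ _)
      · simp at h; rw [h]; exact le_max_right _ _
    exact le_trans (sub_le_sub_right this 1) (le_max_left _ _)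
end

section
/- In a discrete matching model with deterministic impatience p under the First Come, First Matched policy, for every class a ∈ 𝕍, every k ∈ {0,...,p−1} and every arrival word w of length p, the states W^{FCFM}(x^a(k), w) and W^{FCFM}(x^a(k+1), w) differ in at most one letter position, the difference consisting in one state having some class letter where the other has 0. Here x^a(k) = 0^k a^{p−k} is the buffer containing p−k items of class a preceded by k empty slots. -/
/-- Word-profile state of the matching model with deterministic patience `p`:
a list of length `p` over `𝕍 ∪ {0}`, oldest item first; `none` encodes the letter `0`. -/
abbrev MState (V : Type*) := List (Option V)

/-- An admissible matching policy: given the current word-profile and the class of the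
arriving item, it either returns the position of the stored item it is matched with
(which must hold a compatible class), or `none`, which is only allowed when no stored
item is compatible. -/
def Admissible {V : Type*} (G : SimpleGraph V) (Φ : MState V → V → Option ℕ) : Prop :=
  ∀ (x : MState V) (c : V),
    (∀ i : ℕ, Φ x c = some i → ∃ d : V, x.getD i none = some d ∧ G.Adj c d) ∧
    (Φ x c = none → ∀ (i : ℕ) (d : V), x.getD i none = some d → ¬ G.Adj c d)

/-- One step of the word-profile chain under policy `Φ`: the match (if any) is erased and
replaced by `0`, the oldest item leaves, and the arrival is recorded (as its class if
unmatched, as `0` if matched). -/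
def mstep {V : Type*} (Φ : MState V → V → Option ℕ) (x : MState V) (c : V) : MState V :=
  match Φ x c with
  | some i => (x.set i none).tail ++ [none]
  | none => x.tail ++ [some c]

/-- `W Φ x w`: state reached from `x` after feeding the arrival word `w`. -/
def W {V : Type*} (Φ : MState V → V → Option ℕ) (x : MState V) (w : List V) : MState V :=
  w.foldl (mstep Φ) x

/-- The First Come, First Matched policy: the arrival is matched with the oldest
compatible stored item, if any. -/
def fcfm {V : Type*} (G : SimpleGraph V) [DecidableRel G.Adj] :
    MState V → V → Option ℕ :=
  fun x c => x.findIdx? (fun o => o.elim false fun d => decide (G.Adj c d))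

/-- A word `w` of length `2p` is strongly synchronizing if (1-indexed) `w_i ⌣̸ w_j` for all
`i ∈ {1,…,p}` and `j ∈ {p+1,…,p+i}`; here indices are 0-based. -/
def StronglySync {V : Type*} [Inhabited V] (G : SimpleGraph V) (p : ℕ) (w : List V) : Prop :=
  w.length = 2 * p ∧
    ∀ i j : ℕ, i < p → p ≤ j → j ≤ p + i → ¬ G.Adj (w.getD i default) (w.getD j default)

/-- The buffer `x^a(k) = 0^k a^{p−k}`. -/
def xa {V : Type*} (p k : ℕ) (a : V) : MState V :=
  List.replicate k none ++ List.replicate (p - k) (some a)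

namespace Stmt6Aux

variable {V : Type*}

def E (x y : List (Option V)) : Prop := ∀ j, x.getD j none = y.getD j none

def D1 (x y : List (Option V)) : Prop :=
  ∃ i, (∀ j, j ≠ i → x.getD j none = y.getD j none) ∧
    ((∃ d : V, x.getD i none = some d ∧ y.getD i none = none) ∨
     (∃ d : V, y.getD i none = some d ∧ x.getD i none = none))

def R (x y : List (Option V)) : Prop := E x y ∨ D1 x y

lemma D1_symm {x y : List (Option V)} (h : D1 x y) : D1 y x := by
  obtain ⟨i, h1, h2⟩ := h
  exact ⟨i, fun j hj => (h1 j hj).symm, h2.symm⟩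

lemma R_symm {x y : List (Option V)} (h : R x y) : R y x :=
  h.elim (fun h => Or.inl fun j => (h j).symm) (fun h => Or.inr (D1_symm h))

lemma E_eq {x y : List (Option V)} (hl : x.length = y.length) (h : E x y) : x = y := by
  apply List.ext_getElem?
  intro n
  by_cases hn : n < x.length
  · have h1 : x[n]? = some (x.getD n none) := by
      rw [List.getD_eq_getElem?_getD, List.getElem?_eq_getElem hn]; rfl
    have hn' : n < y.length := hl ▸ hn
    have h2 : y[n]? = some (y.getD n none) := by
      rw [List.getD_eq_getElem?_getD, List.getElem?_eq_getElem hn']; rfl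
    rw [h1, h2, h n]
  · rw [List.getElem?_eq_none (by omega), List.getElem?_eq_none (by omega)]

lemma getD_tail (l : List (Option V)) (j : ℕ) : l.tail.getD j none = l.getD (j+1) none := by
  cases l <;> simp

lemma lt_of_getD_some {l : List (Option V)} {i : ℕ} {d : V}
    (h : l.getD i none = some d) : i < l.length := by
  by_contra hc
  rw [List.getD_eq_default _ _ (by omega)] at h
  exact nomatch h

lemma getD_step {p : ℕ} (hp : 0 < p) (z : List (Option V)) (v : Option V)
    (hz : z.length = p) (j : ℕ) :
    (z.tail ++ [v]).getD j none =
      if j + 1 < p then z.getD (j+1) none else if j + 1 = p then v else none := by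
  have ht : z.tail.length = p - 1 := by rw [List.length_tail, hz]
  by_cases h1 : j + 1 < p
  · rw [if_pos h1, List.getD_append _ _ _ _ (by omega), getD_tail]
  · rw [if_neg h1, List.getD_append_right _ _ _ _ (by omega), ht]
    by_cases h2 : j + 1 = p
    · rw [if_pos h2]
      have : j - (p - 1) = 0 := by omega
      rw [this]; rfl
    · rw [if_neg h2, List.getD_eq_default _ _ (by simp; omega)]

lemma getD_set_ne {l : List (Option V)} {m j : ℕ} (h : m ≠ j) (v : Option V) :
    (l.set m v).getD j none = l.getD j none := by
  rw [List.getD_eq_getElem?_getD, List.getD_eq_getElem?_getD, List.getElem?_set, if_neg h]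

lemma getD_set_eq {l : List (Option V)} {m : ℕ} (h : m < l.length) (v : Option V) :
    (l.set m v).getD m none = v := by
  rw [List.getD_eq_getElem?_getD, List.getElem?_set, if_pos rfl, if_pos h]; rfl

lemma fi_some_aux (q : Option V → Bool) (hq : q none = false) (l : List (Option V)) :
    ∀ (i m : ℕ), List.findIdx?.go q l i = some m ↔
      ∃ j, m = j + i ∧ q (l.getD j none) = true ∧ ∀ j' < j, q (l.getD j' none) = false := by
  induction l with
  | nil =>
    intro i m
    simp only [List.findIdx?.go, List.getD_nil]
    constructor
    · intro h; exact nomatch h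
    · rintro ⟨j, _, hj, _⟩; rw [hq] at hj; exact Bool.noConfusion hj
  | cons x xs ih =>
    intro i m
    rw [List.findIdx?.go]
    by_cases hx : q x = true
    · rw [if_pos hx]
      constructor
      · intro h
        injection h with h
        exact ⟨0, by omega, by simpa using hx, fun j' hj' => absurd hj' (by omega)⟩
      · rintro ⟨j, hm, hj, hmin⟩
        rcases Nat.eq_zero_or_pos j with hj0 | hj0
        · subst hj0; congr 1; omega
        · have := hmin 0 hj0
          simp only [List.getD_cons_zero] at this
          rw [hx] at this; exact Bool.noConfusion this
    · rw [if_neg hx, ih]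
      constructor
      · rintro ⟨j, hm, hj, hmin⟩
        refine ⟨j + 1, by omega, by simpa using hj, ?_⟩
        intro j' hj'
        cases j' with
        | zero => simpa using Bool.eq_false_iff.mpr hx
        | succ j'' => simpa using hmin j'' (by omega)
      · rintro ⟨j, hm, hj, hmin⟩
        cases j with
        | zero => simp only [List.getD_cons_zero] at hj; exact absurd hj hx
        | succ j'' =>
          refine ⟨j'', by omega, by simpa using hj, ?_⟩
          intro j' hj'
          have := hmin (j' + 1) (by omega)
          simpa using this

lemma fi_some (q : Option V → Bool) (hq : q none = false) (l : List (Option V)) (m : ℕ) :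
    l.findIdx? q = some m ↔
      q (l.getD m none) = true ∧ ∀ j < m, q (l.getD j none) = false := by
  rw [show l.findIdx? q = List.findIdx?.go q l 0 from rfl, fi_some_aux q hq l 0 m]
  constructor
  · rintro ⟨j, hm, hj, hmin⟩; have : j = m := by omega
    subst this; exact ⟨hj, hmin⟩
  · rintro ⟨hj, hmin⟩; exact ⟨m, by omega, hj, hmin⟩

lemma fi_none (q : Option V → Bool) (hq : q none = false) (l : List (Option V)) :
    l.findIdx? q = none ↔ ∀ j, q (l.getD j none) = false := by
  constructor
  · intro h j
    by_contra hc
    have hc' : q (l.getD j none) = true := by simpa using hc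
    have hex : ∃ n, q (l.getD n none) = true := ⟨j, hc'⟩
    classical
    have hm := Nat.find_spec hex
    have hF : l.findIdx? q = some (Nat.find hex) :=
      (fi_some q hq l _).mpr ⟨hm, fun j' hj' => by
        have := Nat.find_min hex hj'
        simpa using this⟩
    rw [h] at hF; exact nomatch hF
  · intro h
    cases hF : l.findIdx? q with
    | none => rfl
    | some m =>
      have := ((fi_some q hq l m).mp hF).1
      rw [h m] at this; exact Bool.noConfusion this


lemma step_core (G : SimpleGraph V) [DecidableRel G.Adj] {p : ℕ} (hp : 0 < p) (c : V)
    (x y : List (Option V)) (hx : x.length = p) (hy : y.length = p)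
    (i : ℕ) (d : V) (hxi : x.getD i none = some d) (hyi : y.getD i none = none)
    (hagree : ∀ j, j ≠ i → x.getD j none = y.getD j none) :
    R (mstep (fcfm G) x c) (mstep (fcfm G) y c) := by
  set q : Option V → Bool := (fun o => o.elim false fun d => decide (G.Adj c d)) with hqdef
  have hq : q none = false := rfl
  have hqsome : ∀ o : Option V, q o = true → ∃ e : V, o = some e := by
    intro o ho
    cases o with
    | none => exact absurd ho (by rw [hq]; simp)
    | some e => exact ⟨e, rfl⟩
  have hfx : fcfm G x c = x.findIdx? q := rfl
  have hfy : fcfm G y c = y.findIdx? q := rfl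
  have hip : i < p := hx ▸ lt_of_getD_some hxi
  have hqyi : q (y.getD i none) = false := by rw [hyi, hq]
  cases hFx : x.findIdx? q with
  | none =>
    -- no match for x, hence none for y either
    have hxall : ∀ j, q (x.getD j none) = false := (fi_none q hq x).mp hFx
    have hyall : ∀ j, q (y.getD j none) = false := by
      intro j
      by_cases hj : j = i
      · rw [hj]; exact hqyi
      · rw [← hagree j hj]; exact hxall j
    have hFy : y.findIdx? q = none := (fi_none q hq y).mpr hyall
    have hX : mstep (fcfm G) x c = x.tail ++ [some c] := by
      unfold mstep; rw [hfx, hFx]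
    have hY : mstep (fcfm G) y c = y.tail ++ [some c] := by
      unfold mstep; rw [hfy, hFy]
    rw [hX, hY]
    rcases Nat.eq_zero_or_pos i with hi0 | hi0
    · left
      intro j
      rw [getD_step hp _ _ hx, getD_step hp _ _ hy]
      by_cases h1 : j + 1 < p
      · rw [if_pos h1, if_pos h1, hagree (j+1) (by omega)]
      · rw [if_neg h1, if_neg h1]
    · right
      refine ⟨i - 1, ?_, Or.inl ⟨d, ?_, ?_⟩⟩
      · intro j hj
        rw [getD_step hp _ _ hx, getD_step hp _ _ hy]
        by_cases h1 : j + 1 < p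
        · rw [if_pos h1, if_pos h1, hagree (j+1) (by omega)]
        · rw [if_neg h1, if_neg h1]
      · rw [getD_step hp _ _ hx, if_pos (by omega : i - 1 + 1 < p),
          (by omega : i - 1 + 1 = i)]
        exact hxi
      · rw [getD_step hp _ _ hy, if_pos (by omega : i - 1 + 1 < p),
          (by omega : i - 1 + 1 = i)]
        exact hyi
  | some m =>
    obtain ⟨hm1, hm2⟩ := (fi_some q hq x m).mp hFx
    have hmp : m < p := by
      obtain ⟨e, he⟩ := hqsome _ hm1
      exact hx ▸ lt_of_getD_some he
    have hX : mstep (fcfm G) x c = (x.set m none).tail ++ [none] := by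
      unfold mstep; rw [hfx, hFx]
    have hlxs : (x.set m none).length = p := by rw [List.length_set, hx]
    by_cases him : m = i
    · -- x matched at the differing position
      subst him
      cases hFy : y.findIdx? q with
      | some j0 =>
        obtain ⟨hj01, hj02⟩ := (fi_some q hq y j0).mp hFy
        obtain ⟨e, he⟩ := hqsome _ hj01
        have hj0p : j0 < p := hy ▸ lt_of_getD_some he
        have hne : j0 ≠ m := by
          intro h; rw [h, hqyi] at hj01; exact Bool.noConfusion hj01
        have hgt : m < j0 := by
          rcases Nat.lt_or_ge j0 m with hlt | hge
          · exfalso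
            have := hm2 j0 hlt
            rw [hagree j0 hne, hj01] at this
            exact Bool.noConfusion this
          · omega
        have hY : mstep (fcfm G) y c = (y.set j0 none).tail ++ [none] := by
          unfold mstep; rw [hfy, hFy]
        have hlys : (y.set j0 none).length = p := by rw [List.length_set, hy]
        rw [hX, hY]
        right
        refine ⟨j0 - 1, ?_, Or.inl ⟨e, ?_, ?_⟩⟩
        · intro j hj
          rw [getD_step hp _ _ hlxs, getD_step hp _ _ hlys]
          by_cases h1 : j + 1 < p
          · rw [if_pos h1, if_pos h1]
            rw [getD_set_ne (by omega : j0 ≠ j + 1)]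
            by_cases h2 : j + 1 = m
            · rw [h2, getD_set_eq (by omega)]; exact hyi.symm
            · rw [getD_set_ne (by omega : m ≠ j + 1), hagree (j+1) h2]
          · rw [if_neg h1, if_neg h1]
        · rw [getD_step hp _ _ hlxs, if_pos (by omega : j0 - 1 + 1 < p),
            (by omega : j0 - 1 + 1 = j0), getD_set_ne (by omega : m ≠ j0),
            hagree j0 hne]
          exact he
        · rw [getD_step hp _ _ hlys, if_pos (by omega : j0 - 1 + 1 < p),
            (by omega : j0 - 1 + 1 = j0), getD_set_eq (by omega)]
      | none =>
        have hyall : ∀ j, q (y.getD j none) = false := (fi_none q hq y).mp hFy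
        have hY : mstep (fcfm G) y c = y.tail ++ [some c] := by
          unfold mstep; rw [hfy, hFy]
        rw [hX, hY]
        right
        refine ⟨p - 1, ?_, Or.inr ⟨c, ?_, ?_⟩⟩
        · intro j hj
          rw [getD_step hp _ _ hlxs, getD_step hp _ _ hy]
          by_cases h1 : j + 1 < p
          · rw [if_pos h1, if_pos h1]
            by_cases h2 : j + 1 = m
            · rw [h2, getD_set_eq (by omega)]; exact hyi.symm
            · rw [getD_set_ne (by omega : m ≠ j + 1), hagree (j+1) h2]
          · rw [if_neg h1, if_neg h1, if_neg (by omega), if_neg (by omega)]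
        · rw [getD_step hp _ _ hy, if_neg (by omega), if_pos (by omega)]
        · rw [getD_step hp _ _ hlxs, if_neg (by omega), if_pos (by omega)]
    · -- x matched elsewhere: y matches at the same place
      have hqym : q (y.getD m none) = true := by rw [← hagree m him]; exact hm1
      have hFy : y.findIdx? q = some m := by
        refine (fi_some q hq y m).mpr ⟨hqym, ?_⟩
        intro j hj
        by_cases hji : j = i
        · rw [hji]; exact hqyi
        · rw [← hagree j hji]; exact hm2 j hj
      have hY : mstep (fcfm G) y c = (y.set m none).tail ++ [none] := by
        unfold mstep; rw [hfy, hFy]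
      have hlys : (y.set m none).length = p := by rw [List.length_set, hy]
      rw [hX, hY]
      have hagree' : ∀ j, j ≠ i →
          (x.set m none).getD j none = (y.set m none).getD j none := by
        intro j hj
        by_cases h2 : j = m
        · rw [h2, getD_set_eq (by omega), getD_set_eq (by omega)]
        · rw [getD_set_ne (by omega : m ≠ j), getD_set_ne (by omega : m ≠ j),
            hagree j hj]
      rcases Nat.eq_zero_or_pos i with hi0 | hi0
      · left
        intro j
        rw [getD_step hp _ _ hlxs, getD_step hp _ _ hlys]
        by_cases h1 : j + 1 < p
        · rw [if_pos h1, if_pos h1, hagree' (j+1) (by omega)]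
        · rw [if_neg h1, if_neg h1]
      · right
        refine ⟨i - 1, ?_, Or.inl ⟨d, ?_, ?_⟩⟩
        · intro j hj
          rw [getD_step hp _ _ hlxs, getD_step hp _ _ hlys]
          by_cases h1 : j + 1 < p
          · rw [if_pos h1, if_pos h1, hagree' (j+1) (by omega)]
          · rw [if_neg h1, if_neg h1]
        · rw [getD_step hp _ _ hlxs, if_pos (by omega : i - 1 + 1 < p),
            (by omega : i - 1 + 1 = i), getD_set_ne (by omega : m ≠ i)]
          exact hxi
        · rw [getD_step hp _ _ hlys, if_pos (by omega : i - 1 + 1 < p),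
            (by omega : i - 1 + 1 = i), getD_set_ne (by omega : m ≠ i)]
          exact hyi


lemma length_mstep (Φ : MState V → V → Option ℕ) (x : List (Option V)) (c : V)
    (hx : 0 < x.length) : (mstep Φ x c).length = x.length := by
  unfold mstep
  cases Φ x c <;> simp [List.length_tail, List.length_set] <;> omega

lemma step_R (G : SimpleGraph V) [DecidableRel G.Adj] {p : ℕ} (hp : 0 < p) (c : V)
    (x y : List (Option V)) (hx : x.length = p) (hy : y.length = p) (h : R x y) :
    R (mstep (fcfm G) x c) (mstep (fcfm G) y c) := by
  rcases h with h | ⟨i, hagree, ⟨d, hxi, hyi⟩ | ⟨d, hyi, hxi⟩⟩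
  · have : x = y := E_eq (by omega) h
    subst this
    exact Or.inl fun j => rfl
  · exact step_core G hp c x y hx hy i d hxi hyi hagree
  · exact R_symm (step_core G hp c y x hy hx i d hyi hxi
      (fun j hj => (hagree j hj).symm))

lemma W_R (G : SimpleGraph V) [DecidableRel G.Adj] {p : ℕ} (hp : 0 < p) (w : List V) :
    ∀ (x y : List (Option V)), x.length = p → y.length = p → R x y →
      (W (fcfm G) x w).length = p ∧ (W (fcfm G) y w).length = p ∧
        R (W (fcfm G) x w) (W (fcfm G) y w) := by
  induction w with
  | nil => intro x y hx hy h; exact ⟨hx, hy, h⟩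
  | cons c w ih =>
    intro x y hx hy h
    have hx' : (mstep (fcfm G) x c).length = p := by
      rw [length_mstep _ _ _ (by omega)]; exact hx
    have hy' : (mstep (fcfm G) y c).length = p := by
      rw [length_mstep _ _ _ (by omega)]; exact hy
    have := ih (mstep (fcfm G) x c) (mstep (fcfm G) y c) hx' hy'
      (step_R G hp c x y hx hy h)
    simpa [W, List.foldl_cons] using this

lemma xa_getD {p k : ℕ} (hk : k ≤ p) (a : V) (j : ℕ) :
    (xa p k a).getD j none = if j < k then none else if j < p then some a else none := by
  unfold xa
  by_cases h1 : j < k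
  · rw [if_pos h1, List.getD_append _ _ _ _ (by simp; omega),
      List.getD_eq_getElem?_getD, List.getElem?_replicate, if_pos h1]
    rfl
  · rw [if_neg h1, List.getD_append_right _ _ _ _ (by simp; omega),
      List.length_replicate, List.getD_eq_getElem?_getD, List.getElem?_replicate]
    by_cases h2 : j < p
    · rw [if_pos h2, if_pos (by omega)]; rfl
    · rw [if_neg h2, if_neg (by omega)]; rfl

lemma xa_length {p k : ℕ} (hk : k ≤ p) (a : V) : (xa p k a).length = p := by
  unfold xa; simp; omega

end Stmt6Aux

/-- Under FCFM, for every class `a`, every `k ∈ {0,…,p−1}` and every arrival word `w` of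
length `p`, the states `W(x^a(k), w)` and `W(x^a(k+1), w)` differ in at most one position,
the difference consisting in one state having a class letter where the other has `0`. -/


theorem stmt6 {V : Type*} [Inhabited V] (G : SimpleGraph V) [DecidableRel G.Adj]
    (p : ℕ) (hp : 0 < p) (a : V) (k : ℕ) (hk : k < p)
    (w : List V) (hw : w.length = p) :
    W (fcfm G) (xa p k a) w = W (fcfm G) (xa p (k + 1) a) w ∨
    ∃ i : ℕ, i < p ∧
      (∀ j : ℕ, j ≠ i →
        (W (fcfm G) (xa p k a) w).getD j none = (W (fcfm G) (xa p (k + 1) a) w).getD j none) ∧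
      ((∃ d : V, (W (fcfm G) (xa p k a) w).getD i none = some d ∧
          (W (fcfm G) (xa p (k + 1) a) w).getD i none = none) ∨
       (∃ d : V, (W (fcfm G) (xa p (k + 1) a) w).getD i none = some d ∧
          (W (fcfm G) (xa p k a) w).getD i none = none)) := by
  classical
  have hk1 : k + 1 ≤ p := hk
  have hx : (xa p k a).length = p := Stmt6Aux.xa_length (by omega) a
  have hy : (xa p (k+1) a).length = p := Stmt6Aux.xa_length hk1 a
  have hR : Stmt6Aux.R (xa p k a) (xa p (k+1) a) := by
    right
    refine ⟨k, ?_, Or.inl ⟨a, ?_, ?_⟩⟩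
    · intro j hj
      rw [Stmt6Aux.xa_getD (by omega) a j, Stmt6Aux.xa_getD hk1 a j]
      by_cases h1 : j < k
      · rw [if_pos h1, if_pos (by omega)]
      · rw [if_neg h1, if_neg (by omega : ¬ j < k + 1)]
    · rw [Stmt6Aux.xa_getD (by omega) a k, if_neg (by omega), if_pos hk]
    · rw [Stmt6Aux.xa_getD hk1 a k, if_pos (by omega)]
  obtain ⟨hlx, hly, hRW⟩ := Stmt6Aux.W_R G hp w _ _ hx hy hR
  rcases hRW with h | ⟨i, hagree, hdiff⟩
  · exact Or.inl (Stmt6Aux.E_eq (by omega) h)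
  · refine Or.inr ⟨i, ?_, hagree, hdiff⟩
    rcases hdiff with ⟨d, hd, _⟩ | ⟨d, hd, _⟩
    · exact hlx ▸ Stmt6Aux.lt_of_getD_some hd
    · exact hly ▸ Stmt6Aux.lt_of_getD_some hd
end

section
/- For the paw graph G (nodes {1,2,3,4}, edges {1,2},{2,3},{2,4},{3,4}) and deterministic patience p ≥ 1, the number of strongly synchronizing words of length 2p equals N(G,p) = 1 + 2^{2p+3} − 3^{p+1} − 4(p+3)·3^{p−1}. -/
/-- The paw graph on `{1,2,3,4}` (encoded as `Fin 4` with node `i` encoded by `i − 1`):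
edges `{1,2}, {2,3}, {2,4}, {3,4}`. -/
def paw : SimpleGraph (Fin 4) := SimpleGraph.fromRel (fun a b =>
  (a = 0 ∧ b = 1) ∨ (a = 1 ∧ b = 2) ∨ (a = 1 ∧ b = 3) ∨ (a = 2 ∧ b = 3))

/-- Strong synchronization for a word of length `2p` (0-based indices). -/
def SS {V : Type*} [Inhabited V] (G : SimpleGraph V) (p : ℕ) (w : List V) : Prop :=
  w.length = 2 * p ∧
    ∀ i j : ℕ, i < p → p ≤ j → j ≤ p + i → ¬ G.Adj (w.getD i default) (w.getD j default)

namespace Stmt13Aux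

abbrev X := Fin 4

instance pawDec : DecidableRel paw.Adj := fun a b =>
  decidable_of_iff _ (SimpleGraph.fromRel_adj _ a b).symm

/-- The finset of all words of length `n`. -/
def W : ℕ → Finset (List X)
  | 0 => {[]}
  | n+1 => Finset.univ.biUnion (fun a : X => (W n).image (a :: ·))

lemma mem_W : ∀ {n : ℕ} {w : List X}, w ∈ W n ↔ w.length = n := by
  intro n
  induction n with
  | zero => intro w; simp [W, List.length_eq_zero_iff]
  | succ n ih =>
    intro w
    simp only [W, Finset.mem_biUnion, Finset.mem_image, Finset.mem_univ, true_and]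
    constructor
    · rintro ⟨a, u, hu, rfl⟩
      simp [ih.mp hu]
    · intro h
      match w with
      | a :: u => exact ⟨a, u, ih.mpr (by simpa using h), rfl⟩

/-- number of letters non-adjacent to everything in `S` -/
def bw (S : Finset X) : ℕ :=
  (Finset.univ.filter (fun b => ∀ a ∈ S, ¬ paw.Adj a b)).card

def val : List X → ℕ
  | [] => 1
  | a :: u => bw (insert a u.toFinset) * val u

def compat : List X → List X → Bool
  | [], [] => true
  | a :: u, b :: v => (decide (∀ x ∈ a :: u, ¬ paw.Adj x b)) && compat u v
  | _ :: _, [] => false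
  | [], _ :: _ => false

lemma cnt (u : List X) :
    ((W u.length).filter (fun v => compat u v = true)).card = val u := by
  induction u with
  | nil =>
    rw [show ([] : List X).length = 0 from rfl]
    rw [show W 0 = {[]} from rfl]
    rw [Finset.filter_singleton]
    simp [compat, val]
  | cons a u ih =>
    rw [List.length_cons, show W (u.length + 1) =
        Finset.univ.biUnion (fun b : X => (W u.length).image (b :: ·)) from rfl]
    rw [Finset.filter_biUnion]
    rw [Finset.card_biUnion ?disj]
    case disj =>
      intro b _ b' _ hbb
      simp only [Finset.disjoint_left, Finset.mem_filter, Finset.mem_image]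
      rintro w ⟨⟨v, hv, rfl⟩, -⟩ ⟨⟨v', hv', he⟩, -⟩
      injection he with e1 e2
      exact hbb e1.symm
    have key : ∀ b : X,
        (((W u.length).image (b :: ·)).filter (fun v => compat (a :: u) v = true)).card
          = if (∀ x ∈ a :: u, ¬ paw.Adj x b) then val u else 0 := by
      intro b
      rw [Finset.filter_image,
        Finset.card_image_of_injective _ (fun v v' h => by injection h with _ h2; try exact h2)]
      by_cases hb : ∀ x ∈ a :: u, ¬ paw.Adj x b
      · rw [if_pos hb, ← ih]
        congr 1
        apply Finset.filter_congr
        intro v _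
        show (compat (a :: u) (b :: v) = true) ↔ (compat u v = true)
        rw [show compat (a :: u) (b :: v) =
          ((decide (∀ x ∈ a :: u, ¬ paw.Adj x b)) && compat u v) from rfl,
          Bool.and_eq_true, decide_eq_true_eq]
        exact and_iff_right hb
      · rw [if_neg hb]
        rw [Finset.filter_false_of_mem, Finset.card_empty]
        intro v _
        show ¬ compat (a :: u) (b :: v) = true
        rw [show compat (a :: u) (b :: v) =
          ((decide (∀ x ∈ a :: u, ¬ paw.Adj x b)) && compat u v) from rfl,
          Bool.and_eq_true, decide_eq_true_eq]
        exact fun h => hb h.1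
    calc ∑ b : X, (((W u.length).image (b :: ·)).filter
            (fun v => compat (a :: u) v = true)).card
        = ∑ b : X, if (∀ x ∈ a :: u, ¬ paw.Adj x b) then val u else 0 := by
          exact Finset.sum_congr rfl (fun b _ => key b)
      _ = (Finset.univ.filter (fun b : X => ∀ x ∈ a :: u, ¬ paw.Adj x b)).card * val u := by
          rw [← Finset.sum_filter, Finset.sum_const, smul_eq_mul]
      _ = val (a :: u) := by
          have hset : (Finset.univ.filter (fun b : X => ∀ x ∈ a :: u, ¬ paw.Adj x b)).card
              = bw (insert a u.toFinset) := by
            unfold bw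
            congr 1
            apply Finset.filter_congr
            intro b _
            constructor
            · intro h x hx
              apply h
              simp only [Finset.mem_insert, List.mem_toFinset] at hx
              rcases hx with rfl | hx
              · exact List.mem_cons_self
              · exact List.mem_cons_of_mem _ hx
            · intro h x hx
              apply h
              rcases List.mem_cons.mp hx with rfl | hx
              · exact Finset.mem_insert_self _ _
              · exact Finset.mem_insert_of_mem (List.mem_toFinset.mpr hx)
          rw [val, hset]

lemma compat_iff : ∀ (u v : List X), compat u v = true ↔
    (u.length = v.length ∧ ∀ k i : ℕ, k ≤ i → i < u.length →
      ¬ paw.Adj (u.getD i default) (v.getD k default))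
  | [], [] => by simp [compat]
  | [], b :: v => by simp [compat]
  | a :: u, [] => by simp [compat]
  | a :: u, b :: v => by
    rw [show compat (a :: u) (b :: v) =
      ((decide (∀ x ∈ a :: u, ¬ paw.Adj x b)) && compat u v) from rfl,
      Bool.and_eq_true, decide_eq_true_eq, compat_iff u v]
    constructor
    · rintro ⟨h1, h2, h3⟩
      refine ⟨by simp [h2], ?_⟩
      intro k i hk hi
      match k, i with
      | 0, i =>
        have hi' : i < (a :: u).length := hi
        have hmem : (a :: u).getD i default ∈ a :: u := by
          rw [List.getD_eq_getElem _ _ hi']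
          exact List.getElem_mem _
        simpa using h1 _ hmem
      | k+1, i+1 =>
        have := h3 k i (by omega) (by simpa using hi)
        simpa using this
    · rintro ⟨hlen, h⟩
      refine ⟨?_, by simpa using hlen, ?_⟩
      · intro x hx
        obtain ⟨i, hi, rfl⟩ := List.mem_iff_getElem.mp hx
        have := h 0 i (Nat.zero_le _) hi
        rwa [List.getD_eq_getElem _ _ hi, List.getD_cons_zero] at this
      · intro k i hk hi
        have := h (k+1) (i+1) (by omega) (by simpa using hi)
        simpa using this

lemma SS_append {p : ℕ} (u v : List X) (hu : u.length = p) (hv : v.length = p) :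
    SS paw p (u ++ v) ↔ compat u v = true := by
  rw [compat_iff, SS]
  constructor
  · rintro ⟨-, h⟩
    refine ⟨by omega, fun k i hk hi => ?_⟩
    have := h i (p + k) (by omega) (by omega) (by omega)
    rwa [List.getD_append _ _ _ _ (by omega),
      List.getD_append_right _ _ _ _ (by omega),
      show p + k - u.length = k by omega] at this
  · rintro ⟨-, h⟩
    refine ⟨by simp [hu, hv]; omega, fun i j hi hj1 hj2 => ?_⟩
    rw [List.getD_append _ _ _ _ (by omega),
      List.getD_append_right _ _ _ _ (by omega)]
    exact h (j - u.length) i (by omega) (by omega)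

lemma ss_iff (p : ℕ) (w : List X) :
    SS paw p w ↔ ∃ u ∈ W p, ∃ v ∈ W p, compat u v = true ∧ w = u ++ v := by
  constructor
  · intro h
    have hlen : w.length = 2 * p := h.1
    have h1 : (w.take p).length = p := by rw [List.length_take, hlen]; omega
    have h2 : (w.drop p).length = p := by rw [List.length_drop, hlen]; omega
    refine ⟨w.take p, mem_W.mpr h1, w.drop p, mem_W.mpr h2, ?_,
      (List.take_append_drop p w).symm⟩
    exact (SS_append _ _ h1 h2).mp (by rwa [List.take_append_drop])
  · rintro ⟨u, hu, v, hv, hc, rfl⟩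
    exact (SS_append u v (mem_W.mp hu) (mem_W.mp hv)).mpr hc

/-- The finset of strongly synchronizing words. -/
def ssF (p : ℕ) : Finset (List X) :=
  (W p).biUnion (fun u => ((W p).filter (fun v => compat u v = true)).image (u ++ ·))

lemma mem_ssF (p : ℕ) (w : List X) : w ∈ ssF p ↔ SS paw p w := by
  rw [ss_iff]
  simp only [ssF, Finset.mem_biUnion, Finset.mem_image, Finset.mem_filter]
  constructor
  · rintro ⟨u, hu, w, ⟨hw1, hw2⟩, rfl⟩
    exact ⟨u, hu, w, hw1, hw2, rfl⟩
  · rintro ⟨u, hu, v, hv, hc, rfl⟩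
    exact ⟨u, hu, v, ⟨hv, hc⟩, rfl⟩

lemma card_nat (p : ℕ) :
    Nat.card {w : List X // SS paw p w} = (ssF p).card := by
  have e : {w : List X // SS paw p w} ≃ {w // w ∈ ssF p} :=
    Equiv.subtypeEquivRight (fun w => (mem_ssF p w).symm)
  rw [Nat.card_congr e, Nat.card_eq_fintype_card, Fintype.card_coe]

lemma card_ssF (p : ℕ) : (ssF p).card = ∑ u ∈ W p, val u := by
  rw [ssF, Finset.card_biUnion ?disj]
  case disj =>
    intro u hu u' hu' hne
    simp only [Finset.disjoint_left, Finset.mem_image]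
    rintro w ⟨v, hv, rfl⟩ ⟨v', hv', he⟩
    apply hne
    have h1 := mem_W.mp hu
    have h2 := mem_W.mp hu'
    have hthis := congrArg (List.take p) he
    have t1 : List.take p (u' ++ v') = u' := by rw [← h2]; exact List.take_left
    have t2 : List.take p (u ++ v) = u := by rw [← h1]; exact List.take_left
    rw [t1, t2] at hthis
    exact hthis.symm
  refine Finset.sum_congr rfl fun u hu => ?_
  rw [Finset.card_image_of_injective _ (fun v v' h => List.append_cancel_left h)]
  have h := cnt u
  rwa [mem_W.mp hu] at h

/-- fiber sums by letter set -/
def C (n : ℕ) (S : Finset X) : ℕ :=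
  ∑ u ∈ (W n).filter (fun u => u.toFinset = S), val u

lemma sum_val_eq (n : ℕ) : ∑ u ∈ W n, val u = ∑ S : Finset X, C n S :=
  (Finset.sum_fiberwise _ _ _).symm

lemma C_empty_succ (n : ℕ) : C (n+1) ∅ = 0 := by
  unfold C
  rw [Finset.filter_false_of_mem, Finset.sum_empty]
  intro u hu
  rw [List.toFinset_eq_empty_iff]
  rintro rfl
  simpa using mem_W.mp hu

lemma C_succ (n : ℕ) (S : Finset X) :
    C (n+1) S = ∑ a : X, if a ∈ S then bw S * (C n S + C n (S.erase a)) else 0 := by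
  unfold C
  rw [show W (n+1) = Finset.univ.biUnion (fun a : X => (W n).image (a :: ·)) from rfl]
  rw [Finset.filter_biUnion, Finset.sum_biUnion ?disj]
  case disj =>
    intro b _ b' hb' hbb
    simp only [Finset.disjoint_left, Finset.mem_filter, Finset.mem_image]
    rintro w ⟨⟨v, hv, rfl⟩, -⟩ ⟨⟨v', hv', he⟩, -⟩
    injection he with e1 e2
    exact hbb e1.symm
  refine Finset.sum_congr rfl fun a _ => ?_
  rw [Finset.filter_image, Finset.sum_image (fun x _ y _ h => by injection h with _ h2; try exact h2)]
  by_cases ha : a ∈ S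
  · rw [if_pos ha]
    have hift : (W n).filter (fun u => (a :: u).toFinset = S)
        = ((W n).filter (fun u => u.toFinset = S))
          ∪ ((W n).filter (fun u => u.toFinset = S.erase a)) := by
      rw [← Finset.filter_or]
      apply Finset.filter_congr
      intro u _
      simp only [List.toFinset_cons]
      constructor
      · intro h
        by_cases hau : a ∈ u.toFinset
        · left; rw [← h, Finset.insert_eq_self.mpr hau]
        · right; rw [← h, Finset.erase_insert hau]
      · rintro (h | h)
        · rw [h]; exact Finset.insert_eq_self.mpr ha
        · rw [h]; exact Finset.insert_erase ha
    have hval1 : ∀ u ∈ (W n).filter (fun u => u.toFinset = S),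
        val (a :: u) = bw S * val u := by
      intro u hu
      have hts := (Finset.mem_filter.mp hu).2
      rw [val, hts, Finset.insert_eq_self.mpr ha]
    have hval2 : ∀ u ∈ (W n).filter (fun u => u.toFinset = S.erase a),
        val (a :: u) = bw S * val u := by
      intro u hu
      have h2 := (Finset.mem_filter.mp hu).2
      rw [val, h2, Finset.insert_erase ha]
    rw [hift, Finset.sum_union ?disj2]
    case disj2 =>
      rw [Finset.disjoint_left]
      intro u hu hu'
      have e1 := (Finset.mem_filter.mp hu).2
      have e2 := (Finset.mem_filter.mp hu').2
      have : a ∈ S.erase a := by rw [← e2, e1]; exact ha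
      simp at this
    rw [Finset.sum_congr rfl hval1, Finset.sum_congr rfl hval2,
      ← Finset.mul_sum, ← Finset.mul_sum, ← Nat.mul_add]
  · rw [if_neg ha]
    rw [Finset.filter_false_of_mem, Finset.sum_empty]
    intro u _
    intro h
    apply ha
    rw [← h, List.toFinset_cons]
    exact Finset.mem_insert_self _ _

lemma C_bad (n : ℕ) (S : Finset X) (h1 : bw S = 0) (h2 : S ≠ ∅) : C n S = 0 := by
  apply Finset.sum_eq_zero
  intro u hu
  have hS := (Finset.mem_filter.mp hu).2
  cases u with
  | nil => exact absurd hS.symm (by simpa using h2)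
  | cons a u' =>
    rw [List.toFinset_cons] at hS
    rw [val, hS, h1, Nat.zero_mul]

def good : Finset (Finset X) := {∅, {1}, {0}, {2}, {3}, {0,2}, {0,3}, {2,3}, {0,2,3}}

lemma bad_of_not_good : ∀ S : Finset X, S ∉ good → bw S = 0 ∧ S ≠ ∅ := by decide

lemma C_succ_z (n : ℕ) (S : Finset X) :
    (C (n+1) S : ℤ) = ∑ a : X,
      if a ∈ S then (bw S : ℤ) * ((C n S : ℤ) + (C n (S.erase a) : ℤ)) else 0 := by
  rw [C_succ]
  push_cast [apply_ite (Nat.cast : ℕ → ℤ)]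
  rfl

lemma master (n : ℕ) :
    (C (n+1) {0} : ℤ) = 3^(n+1) ∧ (C (n+1) {1} : ℤ) = 1 ∧
    (C (n+1) {2} : ℤ) = 2^(n+1) ∧ (C (n+1) {3} : ℤ) = 2^(n+1) ∧
    (C (n+1) {0,2} : ℤ) = 2*4^(n+1) - 2*3^(n+1) - 2^(n+1) ∧
    (C (n+1) {0,3} : ℤ) = 2*4^(n+1) - 2*3^(n+1) - 2^(n+1) ∧
    (C (n+1) {2,3} : ℤ) = n * 2^(n+1) ∧
    (C (n+1) {0,2,3} : ℤ) = 4^(n+2) - 4*3^(n+1) - 4*(n+1)*3^n - n*2^(n+1) := by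
  induction n with
  | zero =>
    refine ⟨?_, ?_, ?_, ?_, ?_, ?_, ?_, ?_⟩
    · rw [show C 1 {0} = 3 by decide]; norm_num
    · rw [show C 1 {1} = 1 by decide]; norm_num
    · rw [show C 1 {2} = 2 by decide]; norm_num
    · rw [show C 1 {3} = 2 by decide]; norm_num
    · rw [show C 1 {0,2} = 0 by decide]; norm_num
    · rw [show C 1 {0,3} = 0 by decide]; norm_num
    · rw [show C 1 {2,3} = 0 by decide]; norm_num
    · rw [show C 1 {0,2,3} = 0 by decide]; norm_num
  | succ n ih =>
    obtain ⟨h0, h1, h2, h3, h02, h03, h23, h023⟩ := ih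
    have hE : (C (n+1) (∅ : Finset X) : ℤ) = 0 := by rw [C_empty_succ]; rfl
    refine ⟨?_, ?_, ?_, ?_, ?_, ?_, ?_, ?_⟩
    · rw [C_succ_z, Fin.sum_univ_four,
        if_pos (by decide : (0:X) ∈ ({0} : Finset X)),
        if_neg (by decide : ¬ (1:X) ∈ ({0} : Finset X)),
        if_neg (by decide : ¬ (2:X) ∈ ({0} : Finset X)),
        if_neg (by decide : ¬ (3:X) ∈ ({0} : Finset X)),
        show ({0} : Finset X).erase 0 = ∅ by decide,
        show bw {0} = 3 by decide]
      all_goals simp only [h0, hE]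
      all_goals push_cast
      all_goals ring
    · rw [C_succ_z, Fin.sum_univ_four,
        if_neg (by decide : ¬ (0:X) ∈ ({1} : Finset X)),
        if_pos (by decide : (1:X) ∈ ({1} : Finset X)),
        if_neg (by decide : ¬ (2:X) ∈ ({1} : Finset X)),
        if_neg (by decide : ¬ (3:X) ∈ ({1} : Finset X)),
        show ({1} : Finset X).erase 1 = ∅ by decide,
        show bw {1} = 1 by decide]
      all_goals simp only [h1, hE]
      all_goals push_cast
      all_goals ring
    · rw [C_succ_z, Fin.sum_univ_four,
        if_neg (by decide : ¬ (0:X) ∈ ({2} : Finset X)),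
        if_neg (by decide : ¬ (1:X) ∈ ({2} : Finset X)),
        if_pos (by decide : (2:X) ∈ ({2} : Finset X)),
        if_neg (by decide : ¬ (3:X) ∈ ({2} : Finset X)),
        show ({2} : Finset X).erase 2 = ∅ by decide,
        show bw {2} = 2 by decide]
      all_goals simp only [h2, hE]
      all_goals push_cast
      all_goals ring
    · rw [C_succ_z, Fin.sum_univ_four,
        if_neg (by decide : ¬ (0:X) ∈ ({3} : Finset X)),
        if_neg (by decide : ¬ (1:X) ∈ ({3} : Finset X)),
        if_neg (by decide : ¬ (2:X) ∈ ({3} : Finset X)),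
        if_pos (by decide : (3:X) ∈ ({3} : Finset X)),
        show ({3} : Finset X).erase 3 = ∅ by decide,
        show bw {3} = 2 by decide]
      all_goals simp only [h3, hE]
      all_goals push_cast
      all_goals ring
    · rw [C_succ_z, Fin.sum_univ_four,
        if_pos (by decide : (0:X) ∈ ({0,2} : Finset X)),
        if_neg (by decide : ¬ (1:X) ∈ ({0,2} : Finset X)),
        if_pos (by decide : (2:X) ∈ ({0,2} : Finset X)),
        if_neg (by decide : ¬ (3:X) ∈ ({0,2} : Finset X)),
        show ({0,2} : Finset X).erase 0 = {2} by decide,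
        show ({0,2} : Finset X).erase 2 = {0} by decide,
        show bw {0,2} = 2 by decide]
      all_goals simp only [h02, h0, h2]
      all_goals push_cast
      all_goals ring
    · rw [C_succ_z, Fin.sum_univ_four,
        if_pos (by decide : (0:X) ∈ ({0,3} : Finset X)),
        if_neg (by decide : ¬ (1:X) ∈ ({0,3} : Finset X)),
        if_neg (by decide : ¬ (2:X) ∈ ({0,3} : Finset X)),
        if_pos (by decide : (3:X) ∈ ({0,3} : Finset X)),
        show ({0,3} : Finset X).erase 0 = {3} by decide,
        show ({0,3} : Finset X).erase 3 = {0} by decide,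
        show bw {0,3} = 2 by decide]
      all_goals simp only [h03, h0, h3]
      all_goals push_cast
      all_goals ring
    · rw [C_succ_z, Fin.sum_univ_four,
        if_neg (by decide : ¬ (0:X) ∈ ({2,3} : Finset X)),
        if_neg (by decide : ¬ (1:X) ∈ ({2,3} : Finset X)),
        if_pos (by decide : (2:X) ∈ ({2,3} : Finset X)),
        if_pos (by decide : (3:X) ∈ ({2,3} : Finset X)),
        show ({2,3} : Finset X).erase 2 = {3} by decide,
        show ({2,3} : Finset X).erase 3 = {2} by decide,
        show bw {2,3} = 1 by decide]
      all_goals simp only [h23, h2, h3]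
      all_goals push_cast
      all_goals ring
    · rw [C_succ_z, Fin.sum_univ_four,
        if_pos (by decide : (0:X) ∈ ({0,2,3} : Finset X)),
        if_neg (by decide : ¬ (1:X) ∈ ({0,2,3} : Finset X)),
        if_pos (by decide : (2:X) ∈ ({0,2,3} : Finset X)),
        if_pos (by decide : (3:X) ∈ ({0,2,3} : Finset X)),
        show ({0,2,3} : Finset X).erase 0 = {2,3} by decide,
        show ({0,2,3} : Finset X).erase 2 = {0,3} by decide,
        show ({0,2,3} : Finset X).erase 3 = {0,2} by decide,
        show bw {0,2,3} = 1 by decide]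
      all_goals simp only [h023, h23, h02, h03]
      all_goals push_cast
      all_goals ring

lemma total (n : ℕ) :
    ((∑ u ∈ W (n+1), val u : ℕ) : ℤ)
      = 1 + 8 * 4^(n+1) - 7 * 3^(n+1) - 4*(n+1)*3^n := by
  obtain ⟨h0, h1, h2, h3, h02, h03, h23, h023⟩ := master n
  rw [sum_val_eq]
  push_cast
  rw [← Finset.sum_filter_add_sum_filter_not Finset.univ (· ∈ good)
    (fun S => (C (n+1) S : ℤ))]
  have hbad : ∑ S ∈ Finset.univ.filter (fun S => ¬ S ∈ good), (C (n+1) S : ℤ) = 0 := by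
    apply Finset.sum_eq_zero
    intro S hS
    have h := bad_of_not_good S (Finset.mem_filter.mp hS).2
    rw [C_bad _ _ h.1 h.2]
    rfl
  rw [hbad, add_zero, Finset.filter_univ_mem]
  simp only [good]
  rw [Finset.sum_insert (by decide), Finset.sum_insert (by decide),
    Finset.sum_insert (by decide), Finset.sum_insert (by decide),
    Finset.sum_insert (by decide), Finset.sum_insert (by decide),
    Finset.sum_insert (by decide), Finset.sum_insert (by decide),
    Finset.sum_singleton]
  rw [show (C (n+1) (∅ : Finset X) : ℤ) = 0 from by rw [C_empty_succ]; rfl,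
    h0, h1, h2, h3, h02, h03, h23, h023]
  ring

end Stmt13Aux

open Stmt13Aux in
/-- For the paw graph and patience `p ≥ 1`, the number of strongly synchronizing words of
length `2p` is `N(G,p) = 1 + 2^{2p+3} − 3^{p+1} − 4(p+3)·3^{p−1}`. -/
theorem stmt13 (p : ℕ) (hp : 1 ≤ p) :
    (Nat.card {w : List (Fin 4) // SS paw p w} : ℤ) =
      1 + 2 ^ (2 * p + 3) - 3 ^ (p + 1) - 4 * ((p : ℤ) + 3) * 3 ^ (p - 1) := by
  obtain ⟨n, rfl⟩ : ∃ n, p = n + 1 := ⟨p - 1, by omega⟩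
  rw [card_nat, card_ssF, total n]
  have e1 : (2 : ℤ) ^ (2 * (n+1) + 3) = 8 * 4 ^ (n+1) := by
    rw [show (4:ℤ) = 2^2 by norm_num, ← pow_mul, show 2 * (n+1) + 3 = 2*(n+1) + 3 from rfl]
    rw [pow_add]
    norm_num [mul_comm]
  rw [e1, show n + 1 - 1 = n from rfl]
  push_cast
  ring
end

section
/- For the paw graph and any p ≥ 1, the number of strongly synchronizing words of length 2p whose trace is the single letter 1 equals 3^p; whose trace is 2 equals 1; whose trace is 3 (respectively 4) equals 2^p; and whose trace is the two-letter word 13 equals (3/2)·4^p − 2·3^p. -/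
/-- The trace of a word: its distinct letters in order of first appearance. -/
def trace {V : Type*} [DecidableEq V] (l : List V) : List V :=
  l.foldl (fun acc c => if c ∈ acc then acc else acc ++ [c]) []

instance : DecidableRel paw.Adj := fun a b =>
  decidable_of_iff _ (SimpleGraph.fromRel_adj _ a b).symm

example : ¬ paw.Adj 0 2 := by decide
example : ∀ a : Fin 4, ¬ paw.Adj a 0 ↔ a ∈ ({0,2,3} : Finset (Fin 4)) := by decide

section traceLemmas
variable {V : Type*} [DecidableEq V]

private lemma mem_foldl (l : List V) (acc : List V) (x : V) :
    x ∈ l.foldl (fun acc c => if c ∈ acc then acc else acc ++ [c]) acc ↔ x ∈ acc ∨ x ∈ l := by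
  induction l generalizing acc with
  | nil => simp
  | cons a t ih =>
    simp only [List.foldl_cons]
    by_cases h : a ∈ acc
    · rw [if_pos h, ih]
      constructor
      · rintro (h1 | h1) <;> simp [h1]
      · rintro (h1 | h1)
        · exact Or.inl h1
        · rcases List.mem_cons.mp h1 with rfl | h1
          · exact Or.inl h
          · exact Or.inr h1
    · rw [if_neg h, ih]
      simp [or_assoc, or_comm]
      tauto
  
private lemma foldl_pref (l : List V) (acc : List V) :
    ∃ s, l.foldl (fun acc c => if c ∈ acc then acc else acc ++ [c]) acc = acc ++ s := by
  induction l generalizing acc with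
  | nil => exact ⟨[], by simp⟩
  | cons a t ih =>
    simp only [List.foldl_cons]
    by_cases h : a ∈ acc
    · rw [if_pos h]; exact ih acc
    · rw [if_neg h]
      obtain ⟨s, hs⟩ := ih (acc ++ [a])
      exact ⟨[a] ++ s, by rw [hs, List.append_assoc]⟩

private lemma nodup_foldl (l : List V) (acc : List V) (h : acc.Nodup) :
    (l.foldl (fun acc c => if c ∈ acc then acc else acc ++ [c]) acc).Nodup := by
  induction l generalizing acc with
  | nil => simpa
  | cons a t ih =>
    simp only [List.foldl_cons]
    by_cases ha : a ∈ acc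
    · rw [if_pos ha]; exact ih acc h
    · rw [if_neg ha]
      exact ih _ (by simp [List.nodup_append, h, ha]; rintro x hx rfl; exact ha hx)

lemma trace_mem (l : List V) (x : V) : x ∈ trace l ↔ x ∈ l := by
  simpa [trace] using mem_foldl l [] x

lemma trace_nodup (l : List V) : (trace l).Nodup := nodup_foldl l [] (by simp)

lemma trace_cons (a : V) (t : List V) : ∃ s, trace (a :: t) = a :: s := by
  unfold trace
  simp only [List.foldl_cons, List.not_mem_nil, if_neg, List.nil_append]
  simpa using foldl_pref t [a]

private lemma nodup_all_eq {s : List V} {b : V} (h : s.Nodup) (h2 : ∀ x ∈ s, x = b)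
    (h3 : b ∈ s) : s = [b] := by
  cases s with
  | nil => simp at h3
  | cons c u =>
    obtain rfl : c = b := h2 _ List.mem_cons_self
    have hu : u = [] := by
      rw [List.eq_nil_iff_forall_not_mem]
      intro x hx
      obtain rfl : x = c := h2 _ (List.mem_cons_of_mem _ hx)
      exact (List.nodup_cons.mp h).1 hx
    rw [hu]

lemma trace_eq_single (l : List V) (a : V) :
    trace l = [a] ↔ l ≠ [] ∧ ∀ x ∈ l, x = a := by
  constructor
  · intro h
    refine ⟨?_, fun x hx => ?_⟩
    · rintro rfl; simp [trace] at h
    · have := (trace_mem l x).mpr hx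
      rw [h] at this; simpa using this
  · rintro ⟨h1, h2⟩
    refine nodup_all_eq (trace_nodup l) (fun x hx => h2 _ ((trace_mem l x).mp hx)) ?_
    obtain ⟨c, t, rfl⟩ := List.exists_cons_of_ne_nil h1
    have hc : c = a := h2 _ List.mem_cons_self
    exact (trace_mem _ a).mpr (by rw [hc]; exact List.mem_cons_self)

lemma trace_eq_pair {a b : V} (hab : a ≠ b) (l : List V) :
    trace l = [a, b] ↔ (∀ x ∈ l, x = a ∨ x = b) ∧ b ∈ l ∧ ∃ t, l = a :: t := by
  constructor
  · intro h
    refine ⟨fun x hx => ?_, ?_, ?_⟩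
    · have := (trace_mem l x).mpr hx
      rw [h] at this; simpa using this
    · exact (trace_mem l b).mp (by rw [h]; simp)
    · have hne : l ≠ [] := by rintro rfl; simp [trace] at h
      obtain ⟨c, t, rfl⟩ := List.exists_cons_of_ne_nil hne
      obtain ⟨s, hs⟩ := trace_cons c t
      rw [hs] at h
      obtain rfl : c = a := by injection h with h1 _
      exact ⟨t, rfl⟩
  · rintro ⟨h1, h2, t, rfl⟩
    obtain ⟨s, hs⟩ := trace_cons a t
    rw [hs]
    have hnd := trace_nodup (a :: t)
    rw [hs] at hnd
    have hans : a ∉ s := (List.nodup_cons.mp hnd).1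
    congr 1
    refine nodup_all_eq (List.nodup_cons.mp hnd).2 (fun x hx => ?_) ?_
    · rcases h1 x ((trace_mem _ x).mp (by rw [hs]; exact List.mem_cons_of_mem _ hx)) with rfl | rfl
      · exact absurd hx hans
      · rfl
    · have : b ∈ a :: s := by rw [← hs]; exact (trace_mem _ b).mpr h2
      rcases List.mem_cons.mp this with rfl | h
      · exact absurd rfl hab
      · exact h

end traceLemmas

section pw
variable {p : ℕ}

lemma mem_drop_iff {l : List (Fin 4)} {p : ℕ} (hl : l.length = 2 * p) {x : Fin 4} :
    x ∈ l.drop p ↔ ∃ j, p ≤ j ∧ j < 2 * p ∧ l.getD j default = x := by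
  rw [List.mem_iff_getElem]
  constructor
  · rintro ⟨n, h, rfl⟩
    have hn : p + n < l.length := by simp [List.length_drop] at h; omega
    refine ⟨p + n, Nat.le_add_right _ _, by omega, ?_⟩
    rw [List.getD_eq_getElem _ _ hn, List.getElem_drop]
  · rintro ⟨j, h1, h2, rfl⟩
    have hj : j < l.length := by omega
    have hd : j - p < (l.drop p).length := by simp [List.length_drop]; omega
    refine ⟨j - p, hd, ?_⟩
    rw [List.getD_eq_getElem _ _ hj, List.getElem_drop]
    congr 1
    omega

lemma getD_drop {l : List (Fin 4)} {p k : ℕ} (h : p + k < l.length) :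
    (l.drop p).getD k default = l.getD (p + k) default := by
  rw [List.getD_eq_getElem _ _ (by simp [List.length_drop]; omega),
    List.getD_eq_getElem _ _ h, List.getElem_drop]

def pwEquiv (n : ℕ) (S : ℕ → Finset (Fin 4)) :
    {w : List (Fin 4) // w.length = n ∧ ∀ i, i < n → w.getD i default ∈ S i} ≃
      (∀ i : Fin n, {x // x ∈ S i}) where
  toFun w i := ⟨w.1.getD i default, w.2.2 i i.isLt⟩
  invFun f := ⟨List.ofFn (fun i => (f i).1), by simp, fun i hi => by
      rw [List.getD_eq_getElem _ _ (by simpa using hi)]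
      simpa using (f ⟨i, hi⟩).2⟩
  left_inv w := by
    apply Subtype.ext
    refine List.ext_getElem (by simp [w.2.1]) (fun i h1 h2 => ?_)
    rw [List.getElem_ofFn]
    exact List.getD_eq_getElem _ _ h2
  right_inv f := by
    funext i
    apply Subtype.ext
    have hi : (i : ℕ) < (List.ofFn fun j => (f j).1).length := by simp [i.isLt]
    show (List.ofFn fun j => (f j).1).getD i default = (f i).1
    rw [List.getD_eq_getElem _ _ hi, List.getElem_ofFn]

lemma card_pw (n : ℕ) (S : ℕ → Finset (Fin 4)) :
    Nat.card {w : List (Fin 4) // w.length = n ∧ ∀ i, i < n → w.getD i default ∈ S i} =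
      ∏ i ∈ Finset.range n, (S i).card := by
  rw [Nat.card_congr (pwEquiv n S), Nat.card_eq_fintype_card, Fintype.card_pi]
  simp only [Fintype.card_coe]
  exact Fin.prod_univ_eq_prod_range (fun i => (S i).card) n

end pw

section single
variable {p : ℕ}

lemma drop_ne_nil {w : List (Fin 4)} (hl : w.length = 2 * p) (hp : 1 ≤ p) :
    w.drop p ≠ [] := by
  have : (w.drop p).length = p := by simp [List.length_drop, hl]; omega
  intro h
  rw [h] at this
  simp at this
  omega

lemma charSingle (hp : 1 ≤ p) (a : Fin 4) (A : Finset (Fin 4))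
    (hA : ∀ x : Fin 4, ¬ paw.Adj x a ↔ x ∈ A) (w : List (Fin 4)) :
    (SS paw p w ∧ trace (w.drop p) = [a]) ↔
      (w.length = 2 * p ∧ ∀ i, i < 2 * p →
        w.getD i default ∈ (if i < p then A else ({a} : Finset (Fin 4)))) := by
  constructor
  · rintro ⟨⟨len, hadj⟩, htr⟩
    have hall := (trace_eq_single _ a).mp htr
    have hsuf : ∀ j, p ≤ j → j < 2 * p → w.getD j default = a := fun j h1 h2 =>
      hall.2 _ ((mem_drop_iff len).mpr ⟨j, h1, h2, rfl⟩)
    refine ⟨len, fun i hi => ?_⟩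
    by_cases hip : i < p
    · rw [if_pos hip]
      have h1 := hadj i p hip le_rfl (by omega)
      rw [hsuf p le_rfl (by omega)] at h1
      exact (hA _).mp h1
    · rw [if_neg hip, Finset.mem_singleton]
      exact hsuf i (by omega) hi
  · rintro ⟨len, hw⟩
    have hsuf : ∀ j, p ≤ j → j < 2 * p → w.getD j default = a := fun j h1 h2 => by
      have := hw j h2
      rw [if_neg (by omega)] at this
      simpa using this
    refine ⟨⟨len, fun i j hi hj1 hj2 => ?_⟩, ?_⟩
    · rw [hsuf j hj1 (by omega)]
      have := hw i (by omega)
      rw [if_pos hi] at this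
      exact (hA _).mpr this
    · rw [trace_eq_single]
      refine ⟨drop_ne_nil len hp, fun x hx => ?_⟩
      obtain ⟨j, h1, h2, rfl⟩ := (mem_drop_iff len).mp hx
      exact hsuf j h1 h2

lemma cardSingle (hp : 1 ≤ p) (a : Fin 4) (A : Finset (Fin 4))
    (hA : ∀ x : Fin 4, ¬ paw.Adj x a ↔ x ∈ A) :
    Nat.card {w : List (Fin 4) // SS paw p w ∧ trace (w.drop p) = [a]} = A.card ^ p := by
  rw [Nat.card_congr (Equiv.subtypeEquivRight (charSingle hp a A hA)), card_pw, two_mul,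
    Finset.prod_range_add]
  have h1 : ∏ i ∈ Finset.range p, (if i < p then A else ({a} : Finset (Fin 4))).card
      = A.card ^ p := by
    rw [Finset.prod_congr rfl (fun i hi => by
      rw [if_pos (Finset.mem_range.mp hi)]), Finset.prod_const, Finset.card_range]
  have h2 : ∏ i ∈ Finset.range p, (if p + i < p then A else ({a} : Finset (Fin 4))).card = 1 :=
    Finset.prod_eq_one (fun i _ => by rw [if_neg (by omega)]; simp)
  rw [h1, h2, mul_one]

end single

section pair
variable {p : ℕ}

def Qs (p m i : ℕ) : Finset (Fin 4) :=
  if i < m then {0, 2, 3} else if i < p then {0, 2}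
  else if i < p + m then {0} else if i = p + m then {2} else {0, 2}

lemma nadjA : ∀ a b : Fin 4, a ∈ ({0, 2, 3} : Finset (Fin 4)) → b = 0 → ¬ paw.Adj a b := by
  decide

lemma nadjB : ∀ a b : Fin 4, a ∈ ({0, 2} : Finset (Fin 4)) → b ∈ ({0, 2} : Finset (Fin 4)) →
    ¬ paw.Adj a b := by decide

lemma charPair (hp : 1 ≤ p) (m : ℕ) (hm1 : 1 ≤ m) (hm2 : m < p) (w : List (Fin 4)) :
    ((SS paw p w ∧ trace (w.drop p) = [0, 2]) ∧
      ((∀ k, k < m → w.getD (p + k) default ≠ 2) ∧ w.getD (p + m) default = 2)) ↔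
    (w.length = 2 * p ∧ ∀ i, i < 2 * p → w.getD i default ∈ Qs p m i) := by
  constructor
  · rintro ⟨⟨⟨len, hadj⟩, htr⟩, hk, hm⟩
    obtain ⟨hall, h2mem, t, ht⟩ := (trace_eq_pair (by decide : (0 : Fin 4) ≠ 2) _).mp htr
    have hsuf : ∀ j, p ≤ j → j < 2 * p → w.getD j default ∈ ({0, 2} : Finset (Fin 4)) := by
      intro j h1 h2
      rcases hall _ ((mem_drop_iff len).mpr ⟨j, h1, h2, rfl⟩) with h | h <;> rw [h] <;> decide
    have hwp : w.getD p default = 0 := by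
      have h0 : (w.drop p).getD 0 default = 0 := by rw [ht]; rfl
      rwa [getD_drop (by omega), Nat.add_zero] at h0
    refine ⟨len, fun i hi => ?_⟩
    unfold Qs
    split_ifs with h1 h2 h3 h4
    · have := hadj i p (by omega) le_rfl (by omega)
      rw [hwp] at this
      revert this
      have : ∀ a : Fin 4, ¬ paw.Adj a 0 → a ∈ ({0, 2, 3} : Finset (Fin 4)) := by decide
      exact this _
    · have := hadj i (p + m) h2 (by omega) (by omega)
      rw [hm] at this
      revert this
      have : ∀ a : Fin 4, ¬ paw.Adj a 2 → a ∈ ({0, 2} : Finset (Fin 4)) := by decide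
      exact this _
    · have hne := hk (i - p) (by omega)
      rw [show p + (i - p) = i by omega] at hne
      have := hsuf i (by omega) hi
      revert this hne
      have : ∀ a : Fin 4, a ≠ 2 → a ∈ ({0, 2} : Finset (Fin 4)) →
          a ∈ ({0} : Finset (Fin 4)) := by decide
      intro hne hmem
      exact this _ hne hmem
    · rw [show i = p + m from h4, hm]; simp
    · exact hsuf i (by omega) hi
  · rintro ⟨len, hw⟩
    have hget : ∀ i, i < 2 * p → w.getD i default ∈ Qs p m i := hw
    have h1 : ∀ i, i < m → w.getD i default ∈ ({0, 2, 3} : Finset (Fin 4)) := fun i hi => by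
      have := hget i (by omega); unfold Qs at this; rwa [if_pos hi] at this
    have h2 : ∀ i, m ≤ i → i < p → w.getD i default ∈ ({0, 2} : Finset (Fin 4)) :=
      fun i hi1 hi2 => by
        have := hget i (by omega); unfold Qs at this
        rwa [if_neg (by omega), if_pos hi2] at this
    have h3 : ∀ j, p ≤ j → j < p + m → w.getD j default = 0 := fun j hj1 hj2 => by
      have := hget j (by omega); unfold Qs at this
      rw [if_neg (by omega), if_neg (by omega), if_pos hj2] at this
      simpa using this
    have h4 : w.getD (p + m) default = 2 := by
      have := hget (p + m) (by omega); unfold Qs at this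
      rw [if_neg (by omega), if_neg (by omega), if_neg (by omega), if_pos rfl] at this
      simpa using this
    have h5 : ∀ j, p + m < j → j < 2 * p →
        w.getD j default ∈ ({0, 2} : Finset (Fin 4)) := fun j hj1 hj2 => by
      have := hget j (by omega); unfold Qs at this
      rwa [if_neg (by omega), if_neg (by omega), if_neg (by omega), if_neg (by omega)] at this
    have hsuf : ∀ j, p ≤ j → j < 2 * p → w.getD j default ∈ ({0, 2} : Finset (Fin 4)) := by
      intro j hj1 hj2
      rcases lt_trichotomy j (p + m) with h | h | h
      · rw [h3 j hj1 h]; decide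
      · rw [h, h4]; decide
      · exact h5 j h hj2
    refine ⟨⟨⟨len, fun i j hi hj1 hj2 => ?_⟩, ?_⟩, fun k hk => ?_, h4⟩
    · by_cases him : i < m
      · exact nadjA _ _ (h1 i him) (h3 j hj1 (by omega))
      · exact nadjB _ _ (h2 i (by omega) hi) (hsuf j hj1 (by omega))
    · rw [trace_eq_pair (by decide : (0 : Fin 4) ≠ 2)]
      refine ⟨fun x hx => ?_, ?_, ?_⟩
      · obtain ⟨j, hj1, hj2, rfl⟩ := (mem_drop_iff len).mp hx
        have := hsuf j hj1 hj2
        revert this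
        have : ∀ a : Fin 4, a ∈ ({0, 2} : Finset (Fin 4)) → a = 0 ∨ a = 2 := by decide
        exact this _
      · exact (mem_drop_iff len).mpr ⟨p + m, by omega, by omega, h4⟩
      · obtain ⟨c, t, hct⟩ := List.exists_cons_of_ne_nil (drop_ne_nil len hp)
        have hc : c = 0 := by
          have h0 : (w.drop p).getD 0 default = c := by rw [hct]; rfl
          rw [getD_drop (by omega), Nat.add_zero] at h0
          rw [← h0]
          exact h3 p le_rfl (by omega)
        exact ⟨t, by rw [hct, hc]⟩
    · rw [h3 (p + k) (by omega) (by omega)]; decide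

end pair

section find
variable (p : ℕ)

def P5 (p : ℕ) (w : List (Fin 4)) : Prop := SS paw p w ∧ trace (w.drop p) = [0, 2]

def qex (w : List (Fin 4)) : ∃ k, (w.getD (p + k) default = 2 ∨ p ≤ k) :=
  ⟨p, Or.inr le_rfl⟩

def Ffind (w : List (Fin 4)) : ℕ := Nat.find (qex p w)

variable {p}

lemma F_props (hp : 1 ≤ p) {w : List (Fin 4)} (h : P5 p w) :
    1 ≤ Ffind p w ∧ Ffind p w < p ∧
      (∀ k, k < Ffind p w → w.getD (p + k) default ≠ 2) ∧
      w.getD (p + Ffind p w) default = 2 := by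
  obtain ⟨⟨len, _⟩, htr⟩ := h
  obtain ⟨hall, h2mem, t, ht⟩ := (trace_eq_pair (by decide : (0 : Fin 4) ≠ 2) _).mp htr
  obtain ⟨j, hj1, hj2, hj3⟩ := (mem_drop_iff len).mp h2mem
  have hlt : Ffind p w < p := by
    have : Ffind p w ≤ j - p := Nat.find_min' _ (Or.inl (by rw [show p + (j - p) = j by omega]; exact hj3))
    omega
  have hwp : w.getD p default = 0 := by
    have h0 : (w.drop p).getD 0 default = 0 := by rw [ht]; rfl
    rwa [getD_drop (by omega), Nat.add_zero] at h0
  have hspec := Nat.find_spec (qex p w)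
  have hFF : Ffind p w = Nat.find (qex p w) := rfl
  have heq2 : w.getD (p + Ffind p w) default = 2 := by
    rcases hspec with h | h
    · exact h
    · omega
  have hge1 : 1 ≤ Ffind p w := by
    rcases Nat.eq_zero_or_pos (Ffind p w) with h0 | h0
    · exfalso
      rw [h0, Nat.add_zero, hwp] at heq2
      exact absurd heq2 (by decide)
    · omega
  refine ⟨hge1, hlt, fun k hk => ?_, heq2⟩
  have := Nat.find_min (qex p w) hk
  push_neg at this
  exact this.1

lemma F_eq (hp : 1 ≤ p) {w : List (Fin 4)} {m : ℕ} (hm2 : m < p)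
    (hk : ∀ k, k < m → w.getD (p + k) default ≠ 2) (hm : w.getD (p + m) default = 2) :
    Ffind p w = m := by
  rw [Ffind, Nat.find_eq_iff]
  exact ⟨Or.inl hm, fun k hkm => by push_neg; exact ⟨hk k hkm, by omega⟩⟩

end find

section paircount
variable {p : ℕ}

def fib (hp : 1 ≤ p) (x : {w : List (Fin 4) // P5 p w}) : Fin (p - 1) :=
  ⟨Ffind p x.1 - 1, by have := F_props hp x.2; omega⟩

lemma charPair' (hp : 1 ≤ p) (b : Fin (p - 1)) (w : List (Fin 4)) :
    (P5 p w ∧ Ffind p w = b.1 + 1) ↔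
      (w.length = 2 * p ∧ ∀ i, i < 2 * p → w.getD i default ∈ Qs p (b.1 + 1) i) := by
  have hm2 : b.1 + 1 < p := by have := b.2; omega
  constructor
  · rintro ⟨h5, hF⟩
    obtain ⟨_, _, hk, hm⟩ := F_props hp h5
    rw [hF] at hk hm
    exact (charPair hp _ (by omega) hm2 w).mp ⟨h5, hk, hm⟩
  · intro h
    obtain ⟨h5, hk, hm⟩ := (charPair hp _ (by omega) hm2 w).mpr h
    exact ⟨h5, F_eq hp hm2 hk hm⟩

def pairEquiv (hp : 1 ≤ p) :
    {w : List (Fin 4) // P5 p w} ≃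
      Σ b : Fin (p - 1), ∀ i : Fin (2 * p), {x // x ∈ Qs p (b.1 + 1) i} := by
  refine (Equiv.sigmaFiberEquiv (fib hp)).symm.trans (Equiv.sigmaCongrRight (fun b => ?_))
  refine Equiv.trans ?_ (Equiv.trans
    (Equiv.subtypeSubtypeEquivSubtypeInter (P5 p) (fun w => Ffind p w = b.1 + 1))
    (Equiv.trans (Equiv.subtypeEquivRight (charPair' hp b)) (pwEquiv (2 * p) (Qs p (b.1 + 1)))))
  refine Equiv.subtypeEquivRight (fun x => ?_)
  have h1 := F_props hp x.2
  rw [Fin.ext_iff]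
  show Ffind p x.1 - 1 = b.1 ↔ Ffind p x.1 = b.1 + 1
  omega

lemma card_pair (hp : 1 ≤ p) :
    Nat.card {w : List (Fin 4) // P5 p w} =
      ∑ b ∈ Finset.range (p - 1), 3 ^ (b + 1) * 2 ^ (p - 1 - b) * 2 ^ (p - 2 - b) := by
  rw [Nat.card_congr (pairEquiv hp), Nat.card_eq_fintype_card, Fintype.card_sigma]
  rw [← Fin.sum_univ_eq_sum_range (fun b => 3 ^ (b + 1) * 2 ^ (p - 1 - b) * 2 ^ (p - 2 - b)) (p - 1)]
  refine Finset.sum_congr rfl (fun b _ => ?_)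
  rw [Fintype.card_pi]
  simp only [Fintype.card_coe]
  rw [Fin.prod_univ_eq_prod_range (fun i => (Qs p (b.1 + 1) i).card) (2 * p)]
  have hm2 : b.1 + 1 < p := by have := b.2; omega
  obtain ⟨m, hmdef⟩ : ∃ m, m = b.1 + 1 := ⟨_, rfl⟩
  have hm1 : 1 ≤ m := by omega
  have hm2' : m < p := by omega
  rw [← hmdef, show p - 1 - b.1 = p - m by omega, show p - 2 - b.1 = p - m - 1 by omega]
  have c1 : ∀ i, i < m → (Qs p m i).card = 3 := fun i hi => by
    unfold Qs; rw [if_pos hi]; decide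
  have c2 : ∀ i, m ≤ i → i < p → (Qs p m i).card = 2 := fun i h1 h2 => by
    unfold Qs; rw [if_neg (by omega), if_pos h2]; decide
  have c3 : ∀ i, p ≤ i → i < p + m → (Qs p m i).card = 1 := fun i h1 h2 => by
    unfold Qs; rw [if_neg (by omega), if_neg (by omega), if_pos h2]; decide
  have c4 : (Qs p m (p + m)).card = 1 := by
    unfold Qs; rw [if_neg (by omega), if_neg (by omega), if_neg (by omega), if_pos rfl]; decide
  have c5 : ∀ i, p + m < i → (Qs p m i).card = 2 := fun i h1 => by
    unfold Qs; rw [if_neg (by omega), if_neg (by omega), if_neg (by omega), if_neg (by omega)]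
    decide
  rw [two_mul, Finset.prod_range_add]
  have hP1 : ∏ i ∈ Finset.range p, (Qs p m i).card = 3 ^ m * 2 ^ (p - m) := by
    have hs := Finset.prod_range_add (fun i => (Qs p m i).card) m (p - m)
    rw [show m + (p - m) = p by omega] at hs
    rw [hs]
    congr 1
    · rw [Finset.prod_congr rfl (fun i hi => c1 i (Finset.mem_range.mp hi)),
        Finset.prod_const, Finset.card_range]
    · rw [Finset.prod_congr rfl (fun i hi => c2 (m + i) (by omega)
        (by have := Finset.mem_range.mp hi; omega)), Finset.prod_const, Finset.card_range]
  have hP2 : ∏ i ∈ Finset.range p, (Qs p m (p + i)).card = 2 ^ (p - m - 1) := by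
    have hs := Finset.prod_range_add (fun i => (Qs p m (p + i)).card) (m + 1) (p - m - 1)
    rw [show m + 1 + (p - m - 1) = p by omega] at hs
    rw [hs]
    have e1 : ∏ i ∈ Finset.range (m + 1), (Qs p m (p + i)).card = 1 := by
      refine Finset.prod_eq_one (fun i hi => ?_)
      have hi' := Finset.mem_range.mp hi
      rcases Nat.lt_or_ge i m with h | h
      · exact c3 (p + i) (by omega) (by omega)
      · have him : i = m := by omega
        rw [him]; exact c4
    rw [e1, one_mul]
    rw [Finset.prod_congr rfl (fun i _ => c5 (p + (m + 1 + i)) (by omega)),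
      Finset.prod_const, Finset.card_range]
  rw [hP1, hP2]

end paircount

lemma sumId : ∀ p : ℕ, 1 ≤ p →
    (∑ b ∈ Finset.range (p - 1), (3 : ℤ) ^ (b + 1) * 2 ^ (p - 1 - b) * 2 ^ (p - 2 - b)) =
      3 * 2 ^ (2 * p - 1) - 2 * 3 ^ p := by
  intro p hp
  induction p, hp using Nat.le_induction with
  | base => norm_num
  | succ n hn ih =>
    obtain ⟨k, rfl⟩ : ∃ k, n = k + 1 := ⟨n - 1, by omega⟩
    simp only [show k + 1 - 1 = k by omega] at ih
    rw [show k + 1 + 1 - 1 = k + 1 by omega, Finset.sum_range_succ]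
    have hlast : (3 : ℤ) ^ (k + 1) * 2 ^ (k + 1 - k) * 2 ^ (k + 1 + 1 - 2 - k) =
        2 * 3 ^ (k + 1) := by
      rw [show k + 1 - k = 1 by omega, show k + 1 + 1 - 2 - k = 0 by omega]
      ring
    have hrest : ∑ x ∈ Finset.range k, (3 : ℤ) ^ (x + 1) * 2 ^ (k + 1 - x) *
        2 ^ (k + 1 + 1 - 2 - x) = 4 * (3 * 2 ^ (2 * (k + 1) - 1) - 2 * 3 ^ (k + 1)) := by
      rw [← ih, Finset.mul_sum]
      refine Finset.sum_congr rfl (fun b hb => ?_)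
      have hbk := Finset.mem_range.mp hb
      rw [show k + 1 - b = (k - b) + 1 by omega,
        show k + 1 + 1 - 2 - b = (k + 1 - 2 - b) + 1 by omega, pow_succ, pow_succ]
      ring
    rw [hrest, hlast, show 2 * (k + 1 + 1) - 1 = (2 * (k + 1) - 1) + 2 by omega, pow_add]
    ring

/-- For the paw graph and any `p ≥ 1`, the number of strongly synchronizing words of
length `2p` with trace `1` is `3^p`; with trace `2` it is `1`; with trace `3`
(resp. `4`) it is `2^p`; and with trace `13` it is `(3/2)·4^p − 2·3^p = 3·2^{2p−1} − 2·3^p`.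
(Nodes `1,2,3,4` are encoded as `0,1,2,3`; the trace is taken on the second half
`w_{p+1}⋯w_{2p}`.) -/
theorem stmt14 (p : ℕ) (hp : 1 ≤ p) :
    Nat.card {w : List (Fin 4) // SS paw p w ∧ trace (w.drop p) = [0]} = 3 ^ p ∧
    Nat.card {w : List (Fin 4) // SS paw p w ∧ trace (w.drop p) = [1]} = 1 ∧
    Nat.card {w : List (Fin 4) // SS paw p w ∧ trace (w.drop p) = [2]} = 2 ^ p ∧
    Nat.card {w : List (Fin 4) // SS paw p w ∧ trace (w.drop p) = [3]} = 2 ^ p ∧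
    (Nat.card {w : List (Fin 4) // SS paw p w ∧ trace (w.drop p) = [0, 2]} : ℤ) =
      3 * 2 ^ (2 * p - 1) - 2 * 3 ^ p := by
  refine ⟨?_, ?_, ?_, ?_, ?_⟩
  · rw [cardSingle hp 0 {0, 2, 3} (by decide),
      show ({0, 2, 3} : Finset (Fin 4)).card = 3 from by decide]
  · rw [cardSingle hp 1 {1} (by decide),
      show ({1} : Finset (Fin 4)).card = 1 from by decide, one_pow]
  · rw [cardSingle hp 2 {0, 2} (by decide),
      show ({0, 2} : Finset (Fin 4)).card = 2 from by decide]
  · rw [cardSingle hp 3 {0, 3} (by decide),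
      show ({0, 3} : Finset (Fin 4)).card = 2 from by decide]
  · rw [show {w : List (Fin 4) // SS paw p w ∧ trace (w.drop p) = [0, 2]} =
      {w : List (Fin 4) // P5 p w} from rfl, card_pair hp]
    push_cast
    exact sumId p hp
end

section
/- Characterization used in the counting proof: fix a word z = z₁⋯z_l with distinct letters and integers 1 = k₁ < k₂ < ⋯ < k_l < k_{l+1} = p+1. A word w of length 2p is strongly synchronizing with trace z and first-occurrence indices (k₁,...,k_l) if and only if for every i ∈ {1,...,l}: (a) w_{p+k_i} = z_i, and (b) for every j ∈ {k_i,...,k_{i+1}−1}, w_{p+j} ∈ {z₁,...,z_i} and w_j lies in the complement of E({z₁,...,z_i}). -/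
private def tf {V : Type*} [DecidableEq V] : List V → V → List V :=
  fun acc c => if c ∈ acc then acc else acc ++ [c]

private lemma trace_eq_foldl {V : Type*} [DecidableEq V] (l : List V) :
    trace l = l.foldl tf [] := rfl

private lemma mem_tf_foldl {V : Type*} [DecidableEq V] (c : V) :
    ∀ (l acc : List V), c ∈ l.foldl tf acc ↔ c ∈ acc ∨ c ∈ l := by
  intro l
  induction l with
  | nil => simp
  | cons a l ih =>
    intro acc
    rw [List.foldl_cons, ih, List.mem_cons]
    have htf : c ∈ tf acc a ↔ c ∈ acc ∨ c = a := by
      by_cases h : a ∈ acc <;> simp [tf, h]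
      rintro rfl; exact h
    rw [htf]
    tauto

private lemma tf_foldl_const {V : Type*} [DecidableEq V] :
    ∀ (l acc : List V), (∀ a ∈ l, a ∈ acc) → l.foldl tf acc = acc := by
  intro l
  induction l with
  | nil => simp
  | cons a l ih =>
    intro acc h
    rw [List.foldl_cons, show tf acc a = acc from if_pos (h a (by simp))]
    exact ih acc fun b hb => h b (by simp [hb])

private lemma kmono {κ : ℕ → ℕ} {l : ℕ} (h : ∀ i, i < l → κ i < κ (i + 1)) :
    ∀ {a b : ℕ}, a ≤ b → b ≤ l → κ a ≤ κ b := by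
  intro a b hab
  induction hab with
  | refl => intro _; exact le_rfl
  | @step m hm ih =>
    intro hbl
    exact le_trans (ih (by omega)) (le_of_lt (h m (by omega)))

private lemma kmono' {κ : ℕ → ℕ} {l : ℕ} (h : ∀ i, i < l → κ i < κ (i + 1)) :
    ∀ {a b : ℕ}, a < b → b ≤ l → κ a < κ b :=
  fun hab hbl => lt_of_lt_of_le (h _ (by omega)) (kmono h hab hbl)

private lemma kblock {κ : ℕ → ℕ} {l p : ℕ} (h0 : κ 0 = 0)
    (hlast : κ l = p) (hl : 0 < l) {j : ℕ} (hj : j < p) :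
    ∃ m, m < l ∧ κ m ≤ j ∧ j < κ (m + 1) := by
  have hex : ∃ m, j < κ (m + 1) := ⟨l - 1, by rwa [Nat.sub_add_cancel hl, hlast]⟩
  refine ⟨Nat.find hex, ?_, ?_, Nat.find_spec hex⟩
  · have := Nat.find_min' hex (m := l - 1) (by rwa [Nat.sub_add_cancel hl, hlast])
    omega
  · rcases Nat.eq_zero_or_pos (Nat.find hex) with h | h
    · rw [h, h0]; exact Nat.zero_le _
    · have h2 := Nat.find_min hex (show Nat.find hex - 1 < Nat.find hex by omega)
      rw [show Nat.find hex - 1 + 1 = Nat.find hex by omega] at h2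
      omega

private lemma take_succ_getElem {V : Type*} (l : List V) {n : ℕ} (h : n < l.length) :
    l.take (n + 1) = l.take n ++ [l[n]] := by
  rw [List.take_succ, List.getElem?_eq_getElem h]; rfl

private lemma not_mem_take_self {V : Type*} {z : List V} (hz : z.Nodup) {i : ℕ}
    (hi : i < z.length) : z[i] ∉ z.take i := by
  intro hm
  obtain ⟨m, hm1, hm2⟩ := List.mem_iff_getElem.1 hm
  simp at hm1
  rw [List.getElem_take] at hm2
  exact absurd (List.Nodup.getElem_inj_iff hz |>.1 hm2) (by omega)

private lemma take_sub_take {V : Type*} (z : List V) {a b : ℕ} (h : a ≤ b) :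
    z.take a ⊆ z.take b := by
  rw [← min_eq_left h, ← List.take_take]
  exact List.take_subset _ _

/-- Characterization used in the counting proof (0-based indices: the paper's
`1 = k₁ < ⋯ < k_l < k_{l+1} = p+1` becomes `0 = κ₀ < ⋯ < κ_{l-1} < κ_l = p`):
a word `w` of length `2p` is strongly synchronizing with trace `z` and first-occurrence
indices `κ` iff for every `i < l`: (a) `w_{p+κ_i} = z_i`, and (b) for every
`j ∈ [κ_i, κ_{i+1})`, `w_{p+j} ∈ {z₀,…,z_i}` and `w_j ∉ E({z₀,…,z_i})`. -/
theorem stmt17 {V : Type*} [Inhabited V] [DecidableEq V] (G : SimpleGraph V)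
    (p : ℕ) (hp : 0 < p)
    (z : List V) (hz : z.Nodup)
    (κ : ℕ → ℕ) (hκ0 : κ 0 = 0)
    (hκmono : ∀ i : ℕ, i < z.length → κ i < κ (i + 1))
    (hκlast : κ z.length = p)
    (w : List V) (hw : w.length = 2 * p) :
    (StronglySync G p w ∧ trace (w.drop p) = z ∧
        ∀ i : ℕ, i < z.length →
          sInf {j : ℕ | j < p ∧ w.getD (p + j) default = z.getD i default} = κ i) ↔
    (∀ i : ℕ, i < z.length →
        w.getD (p + κ i) default = z.getD i default ∧
        ∀ j : ℕ, κ i ≤ j → j < κ (i + 1) →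
          w.getD (p + j) default ∈ z.take (i + 1) ∧
          ∀ c ∈ z.take (i + 1), ¬ G.Adj (w.getD j default) c) := by
  classical
  have hl : 0 < z.length := by
    rcases Nat.eq_zero_or_pos z.length with h0 | h0
    · rw [h0] at hκlast; omega
    · exact h0
  have hul : (w.drop p).length = p := by rw [List.length_drop, hw]; omega
  have hg : ∀ j : ℕ, (w.drop p).getD j default = w.getD (p + j) default := by
    intro j
    simp [List.getD_eq_getElem?_getD, List.getElem?_drop]
  have hgu : ∀ n : ℕ, n < p → w.getD (p + n) default ∈ w.drop p := by
    intro n hn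
    rw [← hg n, List.getD_eq_getElem _ _ (by omega : n < (w.drop p).length)]
    exact List.getElem_mem _
  constructor
  · rintro ⟨⟨-, hss⟩, htr, hinf⟩
    have key : ∀ i, i < z.length →
        κ i < p ∧ w.getD (p + κ i) default = z.getD i default := by
      intro i hi
      have hzi : z.getD i default ∈ trace (w.drop p) := by
        rw [htr, List.getD_eq_getElem z default hi]
        exact List.getElem_mem _
      rw [trace_eq_foldl, mem_tf_foldl] at hzi
      rcases hzi with h | h
      · exact absurd h List.not_mem_nil
      obtain ⟨j, hj, hje⟩ := List.mem_iff_getElem.1 h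
      have hjp : j < p := by rwa [hul] at hj
      have hjS : j ∈ {j' : ℕ | j' < p ∧ w.getD (p + j') default = z.getD i default} := by
        refine ⟨hjp, ?_⟩
        rw [← hg j, List.getD_eq_getElem _ _ hj]
        exact hje
      have hmem := Nat.sInf_mem (⟨j, hjS⟩ :
        Set.Nonempty {j' : ℕ | j' < p ∧ w.getD (p + j') default = z.getD i default})
      rw [hinf i hi] at hmem
      exact ⟨hmem.1, hmem.2⟩
    intro i hi
    refine ⟨(key i hi).2, ?_⟩
    intro j hij hji1
    have hκip : κ (i + 1) ≤ p := by
      rw [← hκlast]; exact kmono hκmono hi le_rfl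
    have hjp : j < p := lt_of_lt_of_le hji1 hκip
    constructor
    · have hmemz : w.getD (p + j) default ∈ z := by
        rw [← htr, trace_eq_foldl]
        exact (mem_tf_foldl _ _ _).2 (Or.inr (hgu j hjp))
      obtain ⟨m, hm, hme⟩ := List.mem_iff_getElem.1 hmemz
      have hjSm : j ∈ {j' : ℕ | j' < p ∧ w.getD (p + j') default = z.getD m default} := by
        refine ⟨hjp, ?_⟩
        rw [List.getD_eq_getElem z default hm]
        exact hme.symm
      have hκmj : κ m ≤ j := by rw [← hinf m hm]; exact Nat.sInf_le hjSm
      have hmi : m < i + 1 := by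
        by_contra hcon
        have : κ (i + 1) ≤ κ m := kmono hκmono (by omega) (by omega)
        omega
      rw [← hme]
      have hmt : m < (z.take (i + 1)).length := by simp; omega
      rw [show z[m] = (z.take (i + 1))[m]'hmt from (List.getElem_take).symm]
      exact List.getElem_mem _
    · intro c hc
      obtain ⟨m, hm, hme⟩ := List.mem_iff_getElem.1 hc
      have hml : m < i + 1 ∧ m < z.length := by simp at hm; omega
      rw [List.getElem_take] at hme
      have h1 : κ m ≤ j := le_trans (kmono hκmono (by omega : m ≤ i) (by omega)) hij
      have hwm := (key m hml.2).2
      have hκmp : κ m < p := (key m hml.2).1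
      have hadj := hss j (p + κ m) hjp (by omega) (by omega)
      rw [hwm, List.getD_eq_getElem z default hml.2, hme] at hadj
      exact hadj
  · intro h
    have hb : ∀ j, j < p → ∃ m, m < z.length ∧ κ m ≤ j ∧ j < κ (m + 1) ∧
        w.getD (p + j) default ∈ z.take (m + 1) := by
      intro j hj
      obtain ⟨m, hm, h1, h2⟩ := kblock hκ0 hκlast hl hj
      exact ⟨m, hm, h1, h2, ((h m hm).2 j h1 h2).1⟩
    have hss : ∀ i j, i < p → p ≤ j → j ≤ p + i →
        ¬ G.Adj (w.getD i default) (w.getD j default) := by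
      intro a b ha hb1 hb2
      obtain ⟨m, hm, h1, h2, -⟩ := hb a ha
      obtain ⟨t, rfl⟩ : ∃ t, b = p + t := ⟨b - p, by omega⟩
      have htp : t < p := by omega
      obtain ⟨m', hm', h1', h2', hmem⟩ := hb t htp
      have hmm : m' + 1 ≤ m + 1 := by
        by_contra hc
        have : κ (m + 1) ≤ κ m' := kmono hκmono (by omega) (by omega)
        omega
      exact ((h m hm).2 a h1 h2).2 _ (take_sub_take z hmm hmem)
    have hA : ∀ i, i ≤ z.length →
        List.foldl tf [] ((w.drop p).take (κ i)) = z.take i := by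
      intro i hi
      induction i with
      | zero => rw [hκ0]; simp
      | succ i ih =>
        have hi' : i < z.length := by omega
        have hih := ih (by omega)
        have hκip : κ (i + 1) ≤ p := by
          rw [← hκlast]; exact kmono hκmono hi' le_rfl
        have hstep : ∀ d, 1 ≤ d → κ i + d ≤ κ (i + 1) →
            List.foldl tf [] ((w.drop p).take (κ i + d)) = z.take (i + 1) := by
          intro d
          induction d with
          | zero => omega
          | succ d ihd =>
            intro _ hle
            have hidx : κ i + d < (w.drop p).length := by omega
            rw [show κ i + (d + 1) = (κ i + d) + 1 by omega,
                take_succ_getElem _ hidx, List.foldl_append, List.foldl_cons,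
                List.foldl_nil]
            have helt : (w.drop p)[κ i + d] = w.getD (p + (κ i + d)) default := by
              rw [← hg (κ i + d), List.getD_eq_getElem _ _ hidx]
            rcases Nat.eq_zero_or_pos d with hd | hd
            · subst hd
              simp only [Nat.add_zero] at helt ⊢
              rw [hih, helt]
              have hval : w.getD (p + κ i) default = z[i] := by
                rw [(h i hi').1, List.getD_eq_getElem z default hi']
              rw [hval, show tf (z.take i) z[i] = z.take i ++ [z[i]] from
                  if_neg (not_mem_take_self hz hi'),
                  ← take_succ_getElem z hi']
            · rw [ihd hd (by omega), helt]
              have hval : w.getD (p + (κ i + d)) default ∈ z.take (i + 1) :=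
                ((h i hi').2 (κ i + d) (by omega) (by omega)).1
              exact if_pos hval
        have hfin := hstep (κ (i + 1) - κ i)
          (by have := hκmono i hi'; omega) (by have := hκmono i hi'; omega)
        rwa [show κ i + (κ (i + 1) - κ i) = κ (i + 1) from by
          have := hκmono i hi'; omega] at hfin
    have htr : trace (w.drop p) = z := by
      have h1 := hA z.length le_rfl
      rw [hκlast] at h1
      rw [trace_eq_foldl,
        show w.drop p = (w.drop p).take p from
          (List.take_of_length_le (le_of_eq hul)).symm,
        h1, List.take_length]
    refine ⟨⟨hw, hss⟩, htr, ?_⟩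
    intro i hi
    have hκip : κ i < p := by rw [← hκlast]; exact kmono' hκmono hi le_rfl
    have hmem : κ i ∈ {j : ℕ | j < p ∧ w.getD (p + j) default = z.getD i default} :=
      ⟨hκip, (h i hi).1⟩
    refine le_antisymm (Nat.sInf_le hmem) (le_csInf ⟨_, hmem⟩ ?_)
    intro b hb'
    by_contra hc
    push_neg at hc
    obtain ⟨m, hm, h1, h2, hmem2⟩ := hb b hb'.1
    have hmi : m + 1 ≤ i := by
      by_contra hcon
      have : κ i ≤ κ m := kmono hκmono (by omega) (by omega)
      omega
    have hin : z.getD i default ∈ z.take i := by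
      rw [← hb'.2]
      exact take_sub_take z hmi hmem2
    rw [List.getD_eq_getElem z default hi] at hin
    exact not_mem_take_self hz hi hin
end
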